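/- In the performance-difference identity, the expected discounted sum of (R_t - J_π) under trajectories from π̃ equals the expected discounted sum of advantages: E_{τ|π̃}[∑_t γ^t (R(s_t,a_t) - J_π)] = (J_{π̃} - J_π)/(1-γ) = E_{τ|π̃}[∑_t γ^t A_π(s_t,a_t)]. -/

import Mathlib

open Finset

/-- t-step iterate of a transition kernel on a finite space. -/
noncomputable def kerPow {T : Type*} [Fintype T] [DecidableEq T] (K : T → T → ℝ) :
    ℕ → T → T → ℝ
  | 0 => fun s s' => if s = s' then 1 else 0
  | (t + 1) => fun s s' => ∑ u, K s u * kerPow K t u s'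

/-- State-action transition kernel induced by the MDP dynamics `P` and the policy `π`. -/
def saKer {S A : Type*} (P : S → A → S → ℝ) (π : S → A → ℝ) :
    S × A → S × A → ℝ :=
  fun p q => P p.1 p.2 q.1 * π q.1 q.2

/-- Expected discounted sum of `f(s_t, a_t)` starting from `(s,a)`, following `π`. -/
noncomputable def Qgen {S A : Type*} [Fintype S] [Fintype A] [DecidableEq S] [DecidableEq A]
    (P : S → A → S → ℝ) (π : S → A → ℝ) (f : S → A → ℝ) (γ : ℝ) (s : S) (a : A) : ℝ :=
  ∑' t : ℕ, γ ^ t * ∑ p : S × A, kerPow (saKer P π) t (s, a) p * f p.1 p.2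

/-- Expected discounted sum `E_{τ|π}[∑ₜ γ^t f(s_t,a_t)]` over trajectories started
from the initial distribution `μ` and following `π`. -/
noncomputable def expDisc {S A : Type*} [Fintype S] [Fintype A] [DecidableEq S] [DecidableEq A]
    (P : S → A → S → ℝ) (π : S → A → ℝ) (μ : S → ℝ) (γ : ℝ) (f : S → A → ℝ) : ℝ :=
  ∑ s, μ s * ∑ a, π s a * Qgen P π f γ s a

set_option linter.unusedSectionVars false
set_option linter.unusedVariables false
set_option maxHeartbeats 1000000

section aux
variable {T : Type*} [Fintype T] [DecidableEq T] {K : T → T → ℝ}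

lemma kerPow_zero (x y : T) : kerPow K 0 x y = if x = y then 1 else 0 := rfl

lemma kerPow_succ (t : ℕ) (x y : T) :
    kerPow K (t+1) x y = ∑ u, K x u * kerPow K t u y := rfl

lemma kerPow_nonneg (hK0 : ∀ p q, 0 ≤ K p q) : ∀ t x y, 0 ≤ kerPow K t x y
  | 0, x, y => by rw [kerPow_zero]; split <;> norm_num
  | t+1, x, y => Finset.sum_nonneg fun u _ => mul_nonneg (hK0 x u) (kerPow_nonneg hK0 t u y)

lemma kerPow_rowsum (hK1 : ∀ p, ∑ q, K p q = 1) : ∀ t x, ∑ y, kerPow K t x y = 1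
  | 0, x => by simp [kerPow_zero]
  | t+1, x => by
    simp_rw [kerPow_succ]
    rw [Finset.sum_comm]
    have h : ∀ u, ∑ y, K x u * kerPow K t u y = K x u := fun u => by
      rw [← Finset.mul_sum, kerPow_rowsum hK1 t u, mul_one]
    rw [Finset.sum_congr rfl fun u _ => h u]
    exact hK1 x

lemma kerPow_succ_right : ∀ (t : ℕ) (x y : T), kerPow K (t+1) x y = ∑ u, kerPow K t x u * K u y
  | 0, x, y => by simp [kerPow_succ, kerPow_zero]
  | t+1, x, y => by
    have L : kerPow K (t+1+1) x y = ∑ u, K x u * ∑ v, kerPow K t u v * K v y := by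
      rw [kerPow_succ]
      exact Finset.sum_congr rfl fun u _ => by rw [kerPow_succ_right t]
    rw [L]
    simp_rw [Finset.mul_sum]
    rw [Finset.sum_comm]
    refine Finset.sum_congr rfl fun v _ => ?_
    rw [kerPow_succ, Finset.sum_mul]
    exact Finset.sum_congr rfl fun u _ => by ring

lemma kerPow_le_one (hK0 : ∀ p q, 0 ≤ K p q) (hK1 : ∀ p, ∑ q, K p q = 1)
    (t : ℕ) (x y : T) : kerPow K t x y ≤ 1 := by
  calc kerPow K t x y ≤ ∑ z, kerPow K t x z :=
        Finset.single_le_sum (fun z _ => kerPow_nonneg hK0 t x z) (Finset.mem_univ y)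
    _ = 1 := kerPow_rowsum hK1 t x

lemma inner_abs_le (hK0 : ∀ p q, 0 ≤ K p q) (hK1 : ∀ p, ∑ q, K p q = 1)
    (f : T → ℝ) (t : ℕ) (x : T) :
    |∑ p, kerPow K t x p * f p| ≤ ∑ p, |f p| := by
  calc |∑ p, kerPow K t x p * f p| ≤ ∑ p, |kerPow K t x p * f p| :=
        Finset.abs_sum_le_sum_abs _ _
    _ ≤ ∑ p, |f p| := by
        refine Finset.sum_le_sum fun p _ => ?_
        rw [abs_mul, abs_of_nonneg (kerPow_nonneg hK0 t x p)]
        calc kerPow K t x p * |f p| ≤ 1 * |f p| :=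
              mul_le_mul_of_nonneg_right (kerPow_le_one hK0 hK1 t x p) (abs_nonneg _)
          _ = |f p| := one_mul _

lemma summable_ker (hK0 : ∀ p q, 0 ≤ K p q) (hK1 : ∀ p, ∑ q, K p q = 1)
    {γ : ℝ} (hγ0 : 0 ≤ γ) (hγ1 : γ < 1) (f : T → ℝ) (x : T) :
    Summable (fun t => γ ^ t * ∑ p, kerPow K t x p * f p) := by
  refine Summable.of_norm_bounded (g := fun t => γ ^ t * ∑ p, |f p|)
    ((summable_geometric_of_lt_one hγ0 hγ1).mul_right _) fun t => ?_
  rw [Real.norm_eq_abs, abs_mul, abs_pow, abs_of_nonneg hγ0]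
  exact mul_le_mul_of_nonneg_left (inner_abs_le hK0 hK1 f t x) (pow_nonneg hγ0 t)

end aux

section mdp
variable {S A : Type*} [Fintype S] [Fintype A] [DecidableEq S] [DecidableEq A]
  {P : S → A → S → ℝ} {π' : S → A → ℝ}

lemma saKer_nonneg (hP0 : ∀ s a s', 0 ≤ P s a s') (hπ0 : ∀ s a, 0 ≤ π' s a) :
    ∀ p q, 0 ≤ saKer P π' p q :=
  fun p q => mul_nonneg (hP0 _ _ _) (hπ0 _ _)

lemma saKer_rowsum (hP1 : ∀ s a, ∑ s', P s a s' = 1) (hπ1 : ∀ s, ∑ a, π' s a = 1) :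
    ∀ p, ∑ q, saKer P π' p q = 1 := by
  intro p
  rw [Fintype.sum_prod_type]
  simp_rw [saKer, ← Finset.mul_sum]
  calc ∑ s', P p.1 p.2 s' * ∑ a', π' s' a' = ∑ s', P p.1 p.2 s' * 1 :=
        Finset.sum_congr rfl fun s' _ => by rw [hπ1 s']
    _ = 1 := by simp [hP1 p.1 p.2]

variable (hP0 : ∀ s a s', 0 ≤ P s a s') (hP1 : ∀ s a, ∑ s', P s a s' = 1)
  (hπ0 : ∀ s a, 0 ≤ π' s a) (hπ1 : ∀ s, ∑ a, π' s a = 1)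
  {γ : ℝ} (hγ0 : 0 ≤ γ) (hγ1 : γ < 1)

include hP0 hP1 hπ0 hπ1 hγ0 hγ1

lemma Qgen_summable (f : S → A → ℝ) (s : S) (a : A) :
    Summable (fun t => γ ^ t * ∑ p : S × A, kerPow (saKer P π') t (s, a) p * f p.1 p.2) :=
  summable_ker (saKer_nonneg hP0 hπ0) (saKer_rowsum hP1 hπ1) hγ0 hγ1 _ _

lemma Qgen_sub_const (f : S → A → ℝ) (c : ℝ) (s : S) (a : A) :
    Qgen P π' (fun s a => f s a - c) γ s a = Qgen P π' f γ s a - c / (1 - γ) := by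
  unfold Qgen
  have hrow := kerPow_rowsum (K := saKer P π') (saKer_rowsum hP1 hπ1)
  have key : ∀ t : ℕ, (γ ^ t * ∑ p : S × A, kerPow (saKer P π') t (s, a) p * (f p.1 p.2 - c))
      = γ ^ t * ∑ p : S × A, kerPow (saKer P π') t (s, a) p * f p.1 p.2 - γ ^ t * c := by
    intro t
    simp_rw [mul_sub, Finset.sum_sub_distrib, ← Finset.sum_mul, hrow t (s, a), one_mul, mul_sub]
  simp_rw [key]
  rw [Summable.tsum_sub (Qgen_summable hP0 hP1 hπ0 hπ1 hγ0 hγ1 f s a)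
    ((summable_geometric_of_lt_one hγ0 hγ1).mul_right c)]
  congr 1
  rw [tsum_mul_right, tsum_geometric_of_lt_one hγ0 hγ1, div_eq_mul_inv, mul_comm]

lemma Qgen_bellman (f : S → A → ℝ) (s : S) (a : A) :
    Qgen P π' f γ s a
      = f s a + γ * ∑ s', P s a s' * ∑ a', π' s' a' * Qgen P π' f γ s' a' := by
  have hsum := Qgen_summable hP0 hP1 hπ0 hπ1 hγ0 hγ1 (P := P) (π' := π') f
  unfold Qgen
  rw [Summable.tsum_eq_zero_add (hsum s a)]
  have h0 : (γ ^ 0 * ∑ p : S × A, kerPow (saKer P π') 0 (s, a) p * f p.1 p.2) = f s a := by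
    simp [kerPow_zero]
  rw [h0]
  congr 1
  have hstep : ∀ t : ℕ,
      (γ ^ (t+1) * ∑ p : S × A, kerPow (saKer P π') (t+1) (s, a) p * f p.1 p.2)
      = γ * ∑ u : S × A, saKer P π' (s, a) u *
          (γ ^ t * ∑ p : S × A, kerPow (saKer P π') t u p * f p.1 p.2) := by
    intro t
    have h1 : (∑ p : S × A, kerPow (saKer P π') (t+1) (s, a) p * f p.1 p.2)
        = ∑ u : S × A, saKer P π' (s, a) u *
            ∑ p : S × A, kerPow (saKer P π') t u p * f p.1 p.2 := by
      simp_rw [kerPow_succ, Finset.sum_mul, Finset.mul_sum, mul_assoc]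
      exact Finset.sum_comm
    rw [h1, Finset.mul_sum, Finset.mul_sum]
    exact Finset.sum_congr rfl fun u _ => by ring
  simp_rw [hstep]
  rw [tsum_mul_left]
  congr 1
  rw [Summable.tsum_finsetSum (fun u _ => (hsum u.1 u.2).mul_left _)]
  simp_rw [tsum_mul_left]
  rw [Fintype.sum_prod_type]
  refine Finset.sum_congr rfl fun s' _ => ?_
  simp_rw [saKer]
  rw [Finset.mul_sum]
  exact Finset.sum_congr rfl fun a' _ => by rw [mul_assoc]

lemma Qgen_telescope (R' : S → A → ℝ) (V' : S → ℝ) (s : S) (a : A) :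
    Qgen P π' (fun s a => R' s a + γ * (∑ s', P s a s' * V' s') - V' s) γ s a
      = Qgen P π' R' γ s a - V' s := by
  have hK0 := saKer_nonneg (P := P) (π' := π') hP0 hπ0
  have hK1 := saKer_rowsum (P := P) (π' := π') hP1 hπ1
  have hshift : ∀ (t : ℕ) (x : S × A),
      (∑ p : S × A, kerPow (saKer P π') t x p * (γ * ∑ s', P p.1 p.2 s' * V' s'))
        = γ * ∑ q : S × A, kerPow (saKer P π') (t+1) x q * V' q.1 := by
    intro t x
    have h1 : ∀ p : S × A, (∑ s', P p.1 p.2 s' * V' s')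
        = ∑ q : S × A, saKer P π' p q * V' q.1 := by
      intro p
      rw [Fintype.sum_prod_type]
      refine Finset.sum_congr rfl fun s' _ => ?_
      show P p.1 p.2 s' * V' s' = ∑ a', P p.1 p.2 s' * π' s' a' * V' s'
      symm
      calc ∑ a', P p.1 p.2 s' * π' s' a' * V' s'
          = (P p.1 p.2 s' * V' s') * ∑ a', π' s' a' := by
            rw [Finset.mul_sum]; exact Finset.sum_congr rfl fun a' _ => by ring
        _ = P p.1 p.2 s' * V' s' := by rw [hπ1 s', mul_one]
    simp_rw [h1]
    rw [Finset.mul_sum]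
    simp_rw [kerPow_succ_right, Finset.sum_mul, Finset.mul_sum]
    rw [Finset.sum_comm]
    exact Finset.sum_congr rfl fun p _ => Finset.sum_congr rfl fun q _ => by ring
  have hsummR := summable_ker (K := saKer P π') hK0 hK1 hγ0 hγ1 (fun p => R' p.1 p.2) (s, a)
  have hsummW := summable_ker (K := saKer P π') hK0 hK1 hγ0 hγ1 (fun p => V' p.1) (s, a)
  have hsummW1 : Summable
      (fun t => γ ^ (t+1) * ∑ p : S × A, kerPow (saKer P π') (t+1) (s,a) p * V' p.1) :=
    (summable_nat_add_iff 1).2 hsummW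
  have hinner : ∀ t : ℕ,
      (γ ^ t * ∑ p : S × A, kerPow (saKer P π') t (s,a) p *
        (R' p.1 p.2 + γ * (∑ s', P p.1 p.2 s' * V' s') - V' p.1))
      = ((γ ^ t * ∑ p : S × A, kerPow (saKer P π') t (s,a) p * R' p.1 p.2)
        + (γ ^ (t+1) * ∑ p : S × A, kerPow (saKer P π') (t+1) (s,a) p * V' p.1))
        - (γ ^ t * ∑ p : S × A, kerPow (saKer P π') t (s,a) p * V' p.1) := by
    intro t
    have expand : (∑ p : S × A, kerPow (saKer P π') t (s,a) p *
        (R' p.1 p.2 + γ * (∑ s', P p.1 p.2 s' * V' s') - V' p.1))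
      = (∑ p : S × A, kerPow (saKer P π') t (s,a) p * R' p.1 p.2)
        + (∑ p : S × A, kerPow (saKer P π') t (s,a) p * (γ * ∑ s', P p.1 p.2 s' * V' s'))
        - (∑ p : S × A, kerPow (saKer P π') t (s,a) p * V' p.1) := by
      simp_rw [mul_sub, mul_add, Finset.sum_sub_distrib, Finset.sum_add_distrib]
    rw [expand, hshift t (s,a), pow_succ]
    ring
  have lhs_eq : Qgen P π' (fun s a => R' s a + γ * (∑ s', P s a s' * V' s') - V' s) γ s a
      = ∑' t : ℕ, (((γ ^ t * ∑ p : S × A, kerPow (saKer P π') t (s,a) p * R' p.1 p.2)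
        + (γ ^ (t+1) * ∑ p : S × A, kerPow (saKer P π') (t+1) (s,a) p * V' p.1))
        - (γ ^ t * ∑ p : S × A, kerPow (saKer P π') t (s,a) p * V' p.1)) := by
    unfold Qgen
    exact tsum_congr hinner
  rw [lhs_eq, Summable.tsum_sub (hsummR.add hsummW1) hsummW, Summable.tsum_add hsummR hsummW1]
  have hshifted : (∑' t : ℕ, γ ^ (t+1) * ∑ p : S × A, kerPow (saKer P π') (t+1) (s,a) p * V' p.1)
      = (∑' t : ℕ, γ ^ t * ∑ p : S × A, kerPow (saKer P π') t (s,a) p * V' p.1) - V' s := by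
    rw [Summable.tsum_eq_zero_add hsummW]
    have h0 : (γ ^ 0 * ∑ p : S × A, kerPow (saKer P π') 0 (s,a) p * V' p.1) = V' s := by
      simp [kerPow_zero]
    rw [h0]; ring
  rw [hshifted]
  have hQ : (∑' t : ℕ, γ ^ t * ∑ p : S × A, kerPow (saKer P π') t (s,a) p * R' p.1 p.2)
      = Qgen P π' R' γ s a := rfl
  rw [hQ]; ring

end mdp

/-- The expected discounted sum of `R - J_π` under `π̃` equals `(J_{π̃} - J_π)/(1-γ)`,
which equals the expected discounted sum of advantages of `π` under `π̃`. -/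
theorem stmt_12 {S A : Type*} [Fintype S] [Fintype A] [DecidableEq S] [DecidableEq A]
    (P : S → A → S → ℝ) (π πt : S → A → ℝ) (R : S → A → ℝ) (γ : ℝ) (μ : S → ℝ)
    (hP0 : ∀ s a s', 0 ≤ P s a s') (hP1 : ∀ s a, ∑ s', P s a s' = 1)
    (hπ0 : ∀ s a, 0 ≤ π s a) (hπ1 : ∀ s, ∑ a, π s a = 1)
    (hπt0 : ∀ s a, 0 ≤ πt s a) (hπt1 : ∀ s, ∑ a, πt s a = 1)
    (hμ0 : ∀ s, 0 ≤ μ s) (hμ1 : ∑ s, μ s = 1)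
    (hγ0 : 0 ≤ γ) (hγ1 : γ < 1)
    (Jπ Jπt : ℝ) (Q : S → A → ℝ) (V : S → ℝ) (Adv : S → A → ℝ)
    (hJπ : Jπ = (1 - γ) * expDisc P π μ γ R)
    (hJπt : Jπt = (1 - γ) * expDisc P πt μ γ R)
    (hQ : ∀ s a, Q s a = Qgen P π R γ s a)
    (hV : ∀ s, V s = ∑ a, π s a * Q s a)
    (hA : ∀ s a, Adv s a = Q s a - V s) :
    expDisc P πt μ γ (fun s a => R s a - Jπ) = (Jπt - Jπ) / (1 - γ)
      ∧ (Jπt - Jπ) / (1 - γ) = expDisc P πt μ γ Adv := by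
  have hne : (1:ℝ) - γ ≠ 0 := by linarith
  have hEt : expDisc P πt μ γ R = Jπt / (1 - γ) := by
    rw [hJπt, mul_comm, mul_div_assoc, div_self hne, mul_one]
  have hEp : expDisc P π μ γ R = Jπ / (1 - γ) := by
    rw [hJπ, mul_comm, mul_div_assoc, div_self hne, mul_one]
  have part1 : expDisc P πt μ γ (fun s a => R s a - Jπ)
      = expDisc P πt μ γ R - Jπ / (1 - γ) := by
    unfold expDisc
    have h1 : ∀ s, (∑ a, πt s a * Qgen P πt (fun s a => R s a - Jπ) γ s a)
        = (∑ a, πt s a * Qgen P πt R γ s a) - Jπ / (1 - γ) := by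
      intro s
      simp_rw [Qgen_sub_const hP0 hP1 hπt0 hπt1 hγ0 hγ1, mul_sub, Finset.sum_sub_distrib,
        ← Finset.sum_mul, hπt1 s, one_mul]
    simp_rw [h1, mul_sub, Finset.sum_sub_distrib, ← Finset.sum_mul, hμ1, one_mul]
  refine ⟨by rw [part1, hEt, sub_div], ?_⟩
  have hVQ : ∀ s', (∑ a', π s' a' * Qgen P π R γ s' a') = V s' := by
    intro s'
    rw [hV s']
    exact (Finset.sum_congr rfl fun a' _ => by rw [hQ]).symm
  have hAdv : ∀ s a, Adv s a = R s a + γ * (∑ s', P s a s' * V s') - V s := by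
    intro s a
    rw [hA, hQ, Qgen_bellman hP0 hP1 hπ0 hπ1 hγ0 hγ1 R s a]
    simp_rw [hVQ]
  have hAdvf : Adv = fun s a => R s a + γ * (∑ s', P s a s' * V s') - V s :=
    funext fun s => funext fun a => hAdv s a
  have key : ∀ s a, Qgen P πt Adv γ s a = Qgen P πt R γ s a - V s := by
    intro s a
    rw [hAdvf]
    exact Qgen_telescope hP0 hP1 hπt0 hπt1 hγ0 hγ1 R V s a
  have part2 : expDisc P πt μ γ Adv = expDisc P πt μ γ R - ∑ s, μ s * V s := by
    unfold expDisc
    have h1 : ∀ s, (∑ a, πt s a * Qgen P πt Adv γ s a)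
        = (∑ a, πt s a * Qgen P πt R γ s a) - V s := by
      intro s
      simp_rw [key, mul_sub, Finset.sum_sub_distrib, ← Finset.sum_mul, hπt1 s, one_mul]
    simp_rw [h1, mul_sub, Finset.sum_sub_distrib]
  have hμV : (∑ s, μ s * V s) = expDisc P π μ γ R := by
    unfold expDisc
    exact Finset.sum_congr rfl fun s _ => by rw [← hVQ s]
  rw [part2, hμV, hEt, hEp, sub_div]
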